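/- For a functor F : D → C injective on objects, the following are equivalent: (1) F is a closed immersion (full, faithful, injective on objects, and every morphism F(d) → c in C lifts uniquely to a morphism d → d' in D); (2) F is a faithful isofibration and for each d ∈ D the essential image of d\D in F(d)\C is a cosieve; (3) F is a fully faithful Grothendieck opfibration with discrete fibres. -/
import Mathlib


open CategoryTheory CategoryTheory.Functor CategoryTheory.Limits

universe v₁ v₂ u₁ u₂

section Fibrations

variable {C : Type u₁} [Category.{v₁} C] {E : Type u₂} [Category.{v₂} E]

/-- A Grothendieck prefibration: every morphism of the base admits a (weakly) cartesian
lift with prescribed codomain. -/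
def IsPrefibration (p : E ⥤ C) : Prop :=
  ∀ {c c' : C} (f : c ⟶ c') (Y : E), p.obj Y = c' → ∃ (X : E) (φ : X ⟶ Y), p.IsCartesian f φ

/-- A Grothendieck preopfibration: every morphism of the base admits a (weakly) opcartesian
lift with prescribed domain. -/
def IsPreopfibration (p : E ⥤ C) : Prop :=
  ∀ {c c' : C} (f : c ⟶ c') (X : E), p.obj X = c → ∃ (Y : E) (φ : X ⟶ Y), p.IsCocartesian f φ

/-- A Grothendieck opfibration: every morphism of the base admits a strongly opcartesian
lift with prescribed domain. -/
def IsOpfibration (p : E ⥤ C) : Prop :=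
  ∀ {c c' : C} (f : c ⟶ c') (X : E), p.obj X = c →
    ∃ (Y : E) (φ : X ⟶ Y), p.IsStronglyCocartesian f φ

/-- A functor has discrete fibres if every morphism in a fibre is an identity. -/
def HasDiscreteFibers (p : E ⥤ C) : Prop :=
  ∀ (c : C) (X Y : Fiber p c) (f : X ⟶ Y), ∃ h : X = Y, f = eqToHom h

end Fibrations

section ClosedImmersion

variable {C : Type u₁} [Category.{v₁} C] {D : Type u₂} [Category.{v₂} D]

/-- A closed immersion: a full, faithful functor, injective on objects, such that every
morphism `F(d) ⟶ c` lifts uniquely to a morphism `d ⟶ d'` of `D`. -/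
structure IsClosedImmersion (F : D ⥤ C) : Prop where
  full : F.Full
  faithful : F.Faithful
  obj_injective : Function.Injective F.obj
  lift_unique : ∀ {d : D} {c : C} (f : F.obj d ⟶ c),
    ∃! g : Σ d' : D, d ⟶ d', ∃ h : F.obj g.1 = c, F.map g.2 ≫ eqToHom h = f

/-- An isofibration: isomorphisms of the base lift, with prescribed codomain. -/
def IsIsofibration (F : D ⥤ C) : Prop :=
  ∀ {c c' : C} (e : c ≅ c') (Y : D) (hY : F.obj Y = c'),
    ∃ (X : D) (e' : X ≅ Y) (hX : F.obj X = c),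
      F.map e'.hom = eqToHom hX ≫ e.hom ≫ eqToHom hY.symm

/-- For each `d`, the essential image of `d \ D` in `F(d) \ C` is a cosieve:
it is closed under postcomposition. -/
def EssImageCosieve (F : D ⥤ C) : Prop :=
  ∀ (d : D) {c c' : C} (f : F.obj d ⟶ c) (h : c ⟶ c'),
    (∃ (d' : D) (g : d ⟶ d') (e : F.obj d' ≅ c), F.map g ≫ e.hom = f) →
    ∃ (d'' : D) (g' : d ⟶ d'') (e' : F.obj d'' ≅ c'), F.map g' ≫ e'.hom = f ≫ h

end ClosedImmersion

section Aux

variable {C : Type u₁} [Category.{v₁} C] {D : Type u₂} [Category.{v₂} D] {F : D ⥤ C}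

/-- Any two lifts of a morphism out of `F.obj d` through a closed immersion agree. -/
lemma IsClosedImmersion.lift_eq (hF : IsClosedImmersion F) {d : D} {c : C} (f : F.obj d ⟶ c)
    {d₁ d₂ : D} (g₁ : d ⟶ d₁) (g₂ : d ⟶ d₂) (h₁ : F.obj d₁ = c) (h₂ : F.obj d₂ = c)
    (e₁ : F.map g₁ ≫ eqToHom h₁ = f) (e₂ : F.map g₂ ≫ eqToHom h₂ = f) :
    (⟨d₁, g₁⟩ : Σ d', d ⟶ d') = ⟨d₂, g₂⟩ := by
  obtain ⟨u, hu, huniq⟩ := hF.lift_unique f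
  rw [huniq ⟨d₁, g₁⟩ ⟨h₁, e₁⟩, huniq ⟨d₂, g₂⟩ ⟨h₂, e₂⟩]

lemma sigma_snd_of_eq {d d₁ : D} {g₁ g₂ : d ⟶ d₁}
    (h : (⟨d₁, g₁⟩ : Σ d', d ⟶ d') = ⟨d₁, g₂⟩) : g₁ = g₂ := by
  injection h

/-- A closed immersion is a faithful isofibration whose essential images of under-categories
are cosieves. -/
lemma IsClosedImmersion.to_isofibration (h : IsClosedImmersion F) :
    F.Faithful ∧ IsIsofibration F ∧ EssImageCosieve F := by
  refine ⟨h.faithful, ?_, ?_⟩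
  · intro c c' e Y hY
    subst hY
    obtain ⟨⟨X, g⟩, ⟨hX, hg⟩, -⟩ := h.lift_unique e.inv
    subst hX
    replace hg : F.map g = e.inv := by simpa using hg
    obtain ⟨⟨Y', g'⟩, ⟨hY', hg'⟩, -⟩ := h.lift_unique e.hom
    obtain rfl : Y = Y' := (h.obj_injective hY').symm
    replace hg' : F.map g' = e.hom := by
      have : eqToHom hY' = 𝟙 (F.obj Y) := rfl
      rw [this, Category.comp_id] at hg'; exact hg'
    have hgg' : g ≫ g' = 𝟙 Y := by
      refine sigma_snd_of_eq (h.lift_eq (𝟙 (F.obj Y)) (g ≫ g') (𝟙 Y) rfl rfl ?_ (by simp))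
      simp [hg, hg']
    have hg'g : g' ≫ g = 𝟙 X := by
      refine sigma_snd_of_eq (h.lift_eq (𝟙 (F.obj X)) (g' ≫ g) (𝟙 X) rfl rfl ?_ (by simp))
      simp [hg, hg']
    exact ⟨X, ⟨g', g, hg'g, hgg'⟩, rfl, by simpa using hg'⟩
  · intro d c c' f hm _
    obtain ⟨⟨d'', g''⟩, ⟨h'', hg''⟩, -⟩ := h.lift_unique (f ≫ hm)
    exact ⟨d'', g'', eqToIso h'', by rw [eqToIso.hom]; exact hg''⟩

/-- A faithful isofibration with the cosieve property is a closed immersion. -/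
lemma isClosedImmersion_of_isofibration (hinj : Function.Injective F.obj)
    (hfaith : F.Faithful) (hiso : IsIsofibration F) (hcos : EssImageCosieve F) :
    IsClosedImmersion F := by
  have key : ∀ {d : D} {c : C} (f : F.obj d ⟶ c),
      ∃ (X : D) (g : d ⟶ X) (hX : F.obj X = c), F.map g ≫ eqToHom hX = f := by
    intro d c f
    obtain ⟨d'', g', e', hge⟩ := hcos d (𝟙 (F.obj d)) f ⟨d, 𝟙 d, Iso.refl _, by simp⟩
    rw [Category.id_comp] at hge
    obtain ⟨X, e'', hX, hmap⟩ := hiso e'.symm d'' rfl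
    replace hmap : F.map e''.hom = eqToHom hX ≫ e'.inv := by simpa using hmap
    have hinv : F.map e''.inv = e'.hom ≫ eqToHom hX.symm := by
      have h1 : (e'.hom ≫ eqToHom hX.symm) ≫ F.map e''.hom = 𝟙 _ := by
        rw [hmap]; simp
      calc F.map e''.inv
          = ((e'.hom ≫ eqToHom hX.symm) ≫ F.map e''.hom) ≫ F.map e''.inv := by
            rw [h1, Category.id_comp]
        _ = (e'.hom ≫ eqToHom hX.symm) ≫ F.map (e''.hom ≫ e''.inv) := by
            rw [F.map_comp, Category.assoc]
        _ = e'.hom ≫ eqToHom hX.symm := by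
            rw [e''.hom_inv_id, F.map_id, Category.comp_id]
    refine ⟨X, g' ≫ e''.inv, hX, ?_⟩
    rw [F.map_comp, Category.assoc, hinv]
    simp [hge]
  constructor
  · -- Full
    refine ⟨fun {d d'} f => ?_⟩
    obtain ⟨X, g, hX, hfac⟩ := key f
    obtain rfl : X = d' := hinj hX
    refine ⟨g, ?_⟩
    have : eqToHom hX = 𝟙 (F.obj X) := rfl
    rw [this, Category.comp_id] at hfac; exact hfac
  · exact hfaith
  · exact hinj
  · intro d c f
    obtain ⟨X, g, hX, hfac⟩ := key f
    refine ⟨⟨X, g⟩, ⟨hX, hfac⟩, ?_⟩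
    rintro ⟨d₁, g₁⟩ ⟨h₁, hg₁⟩
    obtain rfl : X = d₁ := (hinj (h₁.trans hX.symm)).symm
    have e1 : F.map g₁ ≫ eqToHom hX = f := hg₁
    have : F.map g₁ = F.map g := by
      have := e1.trans hfac.symm
      simpa using ((cancel_mono (eqToHom hX)).mp this)
    rw [hfaith.map_injective this]

/-- A closed immersion is a fully faithful opfibration with discrete fibres. -/
lemma IsClosedImmersion.to_opfibration (h : IsClosedImmersion F) :
    F.Full ∧ F.Faithful ∧ IsOpfibration F ∧ HasDiscreteFibers F := by
  have hfull := h.full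
  have hfaith := h.faithful
  refine ⟨hfull, hfaith, ?_, ?_⟩
  · intro c c' f X hX
    subst hX
    obtain ⟨⟨Y, φ⟩, ⟨hY, hφ⟩, -⟩ := h.lift_unique f
    subst hY
    replace hφ : F.map φ = f := by simpa using hφ
    subst hφ
    refine ⟨Y, φ, { toIsHomLift := inferInstance, universal_property' := ?_ }⟩
    intro b' g φ' hlift
    have hφ' : F.map φ ≫ g = F.map φ' :=
      CategoryTheory.IsHomLift.eq_of_isHomLift F (F.map φ ≫ g) φ'
    obtain ⟨χ, hχ⟩ := hfull.map_surjective g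
    refine ⟨χ, ⟨hχ ▸ inferInstance, ?_⟩, ?_⟩
    · apply hfaith.map_injective
      rw [F.map_comp, hχ, hφ']
    · rintro ψ ⟨hψ1, hψ2⟩
      apply hfaith.map_injective
      rw [hχ, ← CategoryTheory.IsHomLift.eq_of_isHomLift F g ψ]
  · intro c X Y f
    have hf := f.2
    have h₁ : F.obj Y.1 = F.obj X.1 := Y.2.trans X.2.symm
    have e₁ : F.map f.1 ≫ eqToHom h₁ = 𝟙 (F.obj X.1) := by
      rw [CategoryTheory.IsHomLift.fac' F (𝟙 c) f.1]
      simp [eqToHom_trans]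
    have hsig := h.lift_eq (𝟙 (F.obj X.1)) f.1 (𝟙 X.1) h₁ rfl e₁ (by simp)
    have hobj : Y.1 = X.1 := congrArg Sigma.fst hsig
    have hXY : X = Y := Subtype.ext hobj.symm
    subst hXY
    refine ⟨rfl, ?_⟩
    have := sigma_snd_of_eq hsig
    exact Fiber.hom_ext this

/-- A fully faithful opfibration over an injective-on-objects base functor gives a closed
immersion. -/
lemma isClosedImmersion_of_opfibration (hinj : Function.Injective F.obj)
    (hfull : F.Full) (hfaith : F.Faithful) (hop : IsOpfibration F) :
    IsClosedImmersion F := by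
  refine ⟨hfull, hfaith, hinj, ?_⟩
  intro d c f
  obtain ⟨Y, φ, hφ⟩ := hop f d rfl
  haveI := hφ.toIsHomLift
  have hY : F.obj Y = c := CategoryTheory.IsHomLift.codomain_eq F f φ
  subst hY
  have hm : F.map φ = f := (CategoryTheory.IsHomLift.eq_of_isHomLift F f φ).symm
  refine ⟨⟨Y, φ⟩, ⟨rfl, by simpa using hm⟩, ?_⟩
  rintro ⟨d₁, g₁⟩ ⟨h₁, hg₁⟩
  obtain rfl : Y = d₁ := (hinj h₁).symm
  have e1 : F.map g₁ ≫ eqToHom (rfl : F.obj Y = F.obj Y) = f := hg₁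
  have : F.map g₁ = F.map φ := by rw [hm]; simpa using e1
  rw [hfaith.map_injective this]

end Aux

/-- For a functor injective on objects, the following are equivalent:
(1) it is a closed immersion; (2) it is a faithful isofibration whose essential images of
under-categories are cosieves; (3) it is a fully faithful Grothendieck opfibration with
discrete fibres. -/
theorem closedImmersion_tfae {C : Type u₁} [Category.{v₁} C] {D : Type u₂} [Category.{v₂} D]
    (F : D ⥤ C) (hinj : Function.Injective F.obj) :
    (IsClosedImmersion F ↔ (F.Faithful ∧ IsIsofibration F ∧ EssImageCosieve F)) ∧
    (IsClosedImmersion F ↔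
      (F.Full ∧ F.Faithful ∧ IsOpfibration F ∧ HasDiscreteFibers F)) := by
  constructor
  · constructor
    · exact fun h => h.to_isofibration
    · rintro ⟨h1, h2, h3⟩; exact isClosedImmersion_of_isofibration hinj h1 h2 h3
  · constructor
    · exact fun h => h.to_opfibration
    · rintro ⟨h1, h2, h3, h4⟩; exact isClosedImmersion_of_opfibration hinj h1 h2 h3
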